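/- In any pure-strategy Nash equilibrium of the first-price auction, the winner is agent 1 (the agent with the highest valuation), and the price lies in [v_2, v_1]. -/

import Mathlib

open Classical

/-- The k-th highest bid (k counted from 1). -/
noncomputable def kthHighest {n : ℕ} (b : Fin n → ℝ) (k : ℕ) : ℝ :=
  ((List.ofFn b).mergeSort (fun x y => decide (y ≤ x))).getD (k - 1) 0

/-- Agent `i` wins: her bid is highest, with ties broken toward the
agent with the highest valuation, i.e. (for strictly decreasing valuations)
the lowest index among the maximal bidders. -/
def wins {n : ℕ} (b : Fin n → ℝ) (i : Fin n) : Prop :=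
  (∀ j, b j ≤ b i) ∧ ∀ j, b j = b i → i ≤ j

/-- The price paid by the winner in the k-price auction (2 ≤ k ≤ n), or in the
first-price auction (the case k = n+1), where the winner pays the highest bid. -/
noncomputable def price {n : ℕ} (k : ℕ) (b : Fin n → ℝ) : ℝ :=
  if k = n + 1 then kthHighest b 1 else kthHighest b k

/-- The winner gets her valuation minus the price; losers get 0. -/
noncomputable def utility {n : ℕ} (v : Fin n → ℝ) (k : ℕ) (b : Fin n → ℝ)
    (i : Fin n) : ℝ :=
  if wins b i then v i - price k b else 0

/-- Pure-strategy Nash equilibrium with nonnegative bids: no agent can strictly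
improve her utility by a unilateral deviation to another nonnegative bid. -/
def NashEq {n : ℕ} (v : Fin n → ℝ) (k : ℕ) (b : Fin n → ℝ) : Prop :=
  (∀ i, 0 ≤ b i) ∧
  ∀ i : Fin n, ∀ b' : ℝ, 0 ≤ b' →
    utility v k (Function.update b i b') i ≤ utility v k b i

/-- One-based valuation indexing, with the convention `v_{n+1} = 0`. -/
noncomputable def vIdx {n : ℕ} (v : Fin n → ℝ) (j : ℕ) : ℝ :=
  if h : 1 ≤ j ∧ j ≤ n then v ⟨j - 1, by omega⟩ else 0

lemma kth1_eq {n : ℕ} (hn : 1 ≤ n) (b : Fin n → ℝ) (i : Fin n) (hw : wins b i) :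
    kthHighest b 1 = b i := by
  unfold kthHighest
  set L := (List.ofFn b).mergeSort (fun x y => decide (y ≤ x)) with hL
  have hperm := List.mergeSort_perm (List.ofFn b) (fun x y => decide (y ≤ x))
  have hsort := List.pairwise_mergeSort (le := fun x y : ℝ => decide (y ≤ x))
    (fun a b c h1 h2 => by simp_all; linarith)
    (fun a b => by simp [le_total b a]) (List.ofFn b)
  have hlen : L.length = n := by
    rw [hL, (List.mergeSort_perm _ _).length_eq, List.length_ofFn]
  cases hL' : L with
  | nil => rw [hL'] at hlen; simp at hlen; omega
  | cons x t =>
    simp only [List.getD]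
    have hx : x ∈ List.ofFn b := by
      have : x ∈ L := by rw [hL']; exact List.mem_cons_self
      exact (hperm).mem_iff.mp this
    obtain ⟨j, hj⟩ := List.mem_ofFn.mp hx
    have hxle : x ≤ b i := hj ▸ hw.1 j
    have hbi : b i ∈ L := hperm.mem_iff.mpr (by exact List.mem_ofFn.mpr ⟨i, rfl⟩)
    have hge : b i ≤ x := by
      rw [← hL, hL'] at hsort
      rw [hL'] at hbi
      rcases List.mem_cons.mp hbi with h | h
      · exact h.le
      · have := (List.pairwise_cons.mp hsort).1 _ h
        simpa using this
    simp [le_antisymm hxle hge]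

lemma price_eq {n : ℕ} (hn : 1 ≤ n) (b : Fin n → ℝ) (i : Fin n) (hw : wins b i) :
    price (n + 1) b = b i := by
  unfold price; simp [kth1_eq hn b i hw]

lemma wins_unique {n : ℕ} {b : Fin n → ℝ} {i j : Fin n} (hi : wins b i) (hj : wins b j) :
    i = j :=
  le_antisymm (hi.2 j (le_antisymm (hi.1 j) (hj.1 i)))
    (hj.2 i (le_antisymm (hj.1 i) (hi.1 j)))

theorem stmt8 {n : ℕ} (hn : 2 ≤ n) (v : Fin n → ℝ) (hv : StrictAnti v) (hvpos : ∀ i, 0 < v i)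
    (b : Fin n → ℝ) (hb : NashEq v (n + 1) b) (i : Fin n) (hw : wins b i) :
    i = ⟨0, by omega⟩ ∧ vIdx v 2 ≤ price (n + 1) b ∧
      price (n + 1) b ≤ v ⟨0, by omega⟩ := by
  have hn1 : 1 ≤ n := by omega
  have hnn : ∀ j, 0 ≤ b j := hb.1
  have hpe : price (n + 1) b = b i := price_eq hn1 b i hw
  have hlose : ∀ j : Fin n, j ≠ i → utility v (n+1) b j = 0 := by
    intro j hj
    unfold utility
    rw [if_neg]
    intro hwj; exact hj (wins_unique hwj hw)
  have hwin_util : utility v (n+1) b i = v i - b i := by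
    unfold utility; rw [if_pos hw, hpe]
  -- Step 1: any j < i has v j ≤ b i
  have step1 : ∀ j : Fin n, j < i → v j ≤ b i := by
    intro j hji
    set b2 := Function.update b j (b i) with hb2
    have hwin2 : wins b2 j := by
      constructor
      · intro k
        by_cases hk : k = j
        · subst hk; simp [hb2]
        · simp [hb2, Function.update_of_ne hk]
          exact hw.1 k
      · intro k hk
        by_cases hkj : k = j
        · subst hkj; exact le_refl _
        · simp [hb2, Function.update_of_ne hkj] at hk
          exact le_of_lt (lt_of_lt_of_le hji (hw.2 k hk))
    have hdev := hb.2 j (b i) (hnn i)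
    rw [← hb2] at hdev
    have hu2 : utility v (n+1) b2 j = v j - b i := by
      unfold utility
      rw [if_pos hwin2, price_eq hn1 b2 j hwin2]
      simp [hb2]
    rw [hu2, hlose j (ne_of_lt hji)] at hdev
    linarith
  -- Step 2: b i ≤ v i
  have step2 : b i ≤ v i := by
    set b2 := Function.update b i 0 with hb2
    have hdev := hb.2 i 0 le_rfl
    rw [← hb2, hwin_util] at hdev
    by_cases hw2 : wins b2 i
    · have hall0 : ∀ k, b2 k = 0 := by
        intro k
        have h1 : b2 k ≤ b2 i := hw2.1 k
        have h2 : b2 i = 0 := by simp [hb2]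
        have h3 : 0 ≤ b2 k := by
          by_cases hk : k = i
          · subst hk; simp [hb2]
          · simp [hb2, Function.update_of_ne hk]; exact hnn k
        linarith
      have hu2 : utility v (n+1) b2 i = v i := by
        unfold utility
        rw [if_pos hw2, price_eq hn1 b2 i hw2, hall0 i, sub_zero]
      rw [hu2] at hdev
      have : b i ≤ 0 := by linarith
      have := hnn i
      have := hvpos i
      linarith
    · have hu2 : utility v (n+1) b2 i = 0 := by
        unfold utility; rw [if_neg hw2]
      rw [hu2] at hdev
      linarith
  -- Step 3: i = 0
  have hi0 : i = (⟨0, by omega⟩ : Fin n) := by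
    by_contra hne
    have h0lt : (⟨0, by omega⟩ : Fin n) < i := by
      have hvne : i.val ≠ 0 := fun h => hne (Fin.ext h)
      rw [Fin.lt_def]; simpa using Nat.pos_of_ne_zero hvne
    have h1 := step1 _ h0lt
    have h2 : v i < v ⟨0, by omega⟩ := hv h0lt
    linarith
  refine ⟨hi0, ?_, ?_⟩
  · -- vIdx v 2 ≤ price
    have hv2 : vIdx v 2 = v ⟨1, by omega⟩ := by
      unfold vIdx
      rw [dif_pos ⟨by omega, by omega⟩]
    rw [hv2, hpe]
    set j1 : Fin n := ⟨1, by omega⟩ with hj1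
    have hj1i : j1 ≠ i := by
      rw [hi0]; intro h
      have := congrArg Fin.val h
      simp [hj1] at this
    by_contra hlt
    push_neg at hlt
    set ε := (v j1 - b i) / 2 with hε
    have hεpos : 0 < ε := by simp [hε]; linarith
    set b2 := Function.update b j1 (b i + ε) with hb2
    have hwin2 : wins b2 j1 := by
      constructor
      · intro k
        by_cases hk : k = j1
        · subst hk; exact le_refl _
        · simp [hb2, Function.update_of_ne hk]
          have := hw.1 k
          linarith
      · intro k hk
        by_cases hkj : k = j1
        · subst hkj; exact le_refl _
        · exfalso
          simp [hb2, Function.update_of_ne hkj] at hk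
          have := hw.1 k
          linarith
    have hdev := hb.2 j1 (b i + ε) (by have := hnn i; linarith)
    rw [← hb2] at hdev
    have hu2 : utility v (n+1) b2 j1 = v j1 - (b i + ε) := by
      unfold utility
      rw [if_pos hwin2, price_eq hn1 b2 j1 hwin2]
      simp [hb2]
    rw [hu2, hlose j1 hj1i] at hdev
    simp [hε] at hdev
    linarith
  · rw [hpe, ← hi0]
    exact step2
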